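/- Let N be a network with influence specification I. If N is injective over K_d(N,I) — i.e., for every kinetics K differentiable with respect to I and every pair of distinct a, b ∈ ℝ^n_{>0} with a − b ∈ Γ one has f_K(a) ≠ f_K(b) — then N cannot have positive degenerate steady states: for every K ∈ K_d(N,I) and every c ∈ ℝ^n_{>0} with f_K(c) = 0, one has ker(J_c(f_K)) ∩ Γ = {0}. -/

import Mathlib

noncomputable section

namespace CRN

variable {n m : ℕ}

/-- The orthogonal complement of a subspace of `Fin n → ℝ` with respect to the
standard scalar product. -/
def orthComp (F : Submodule ℝ (Fin n → ℝ)) : Submodule ℝ (Fin n → ℝ) where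
  carrier := {w | ∀ v ∈ F, ∑ i, w i * v i = 0}
  add_mem' := by
    intro a b ha hb v hv
    have h1 := ha v hv
    have h2 := hb v hv
    have key : ∀ i, (a + b) i * v i = a i * v i + b i * v i := fun i => by
      simp [add_mul]
    calc ∑ i, (a + b) i * v i
        = ∑ i, (a i * v i + b i * v i) := Finset.sum_congr rfl (fun i _ => key i)
      _ = (∑ i, a i * v i) + ∑ i, b i * v i := Finset.sum_add_distrib
      _ = 0 := by rw [h1, h2, add_zero]
  zero_mem' := by
    intro v hv
    simp
  smul_mem' := by
    intro t a ha v hv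
    have h1 := ha v hv
    simp only [Set.mem_setOf_eq, Pi.smul_apply, smul_eq_mul]
    calc ∑ i, t * a i * v i
        = t * ∑ i, a i * v i := by
          rw [Finset.mul_sum]
          exact Finset.sum_congr rfl fun i _ => (mul_assoc _ _ _)
      _ = 0 := by rw [h1, mul_zero]

/-- `ω` is a reduced basis of `F^⊥`: it is a basis of the orthogonal complement of `F`,
`ω i` has `i`-th coordinate `1`, and `j`-th coordinate `0` for every `j < d`, `j ≠ i`. -/
def IsReducedBasis (d : ℕ) (F : Submodule ℝ (Fin n → ℝ)) (ω : Fin d → Fin n → ℝ) : Prop :=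
  (∀ i, ω i ∈ orthComp F) ∧
  Submodule.span ℝ (Set.range ω) = orthComp F ∧
  LinearIndependent ℝ ω ∧
  (∀ (i : Fin d) (j : Fin n), (j : ℕ) = (i : ℕ) → ω i j = 1) ∧
  (∀ (i : Fin d) (j : Fin n), (j : ℕ) < d → (j : ℕ) ≠ (i : ℕ) → ω i j = 0)

/-- The matrix whose top `d` rows are `ω` and whose remaining rows agree with `M`. -/
def tildeMat (d : ℕ) (ω : Fin d → Fin n → ℝ) (M : Matrix (Fin n) (Fin n) ℝ) :
    Matrix (Fin n) (Fin n) ℝ :=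
  Matrix.of fun i j => if h : (i : ℕ) < d then ω ⟨(i : ℕ), h⟩ j else M i j

/-- The stoichiometric matrix: `r`-th column is `y' r - y r`. -/
def stoich (y y' : Fin m → Fin n → ℝ) : Matrix (Fin n) (Fin m) ℝ :=
  Matrix.of fun i r => y' r i - y r i

/-- The stoichiometric subspace: the span of the reaction vectors `y' r - y r`. -/
def stoichSpan (y y' : Fin m → Fin n → ℝ) : Submodule ℝ (Fin n → ℝ) :=
  Submodule.span ℝ (Set.range fun r => (fun i => y' r i - y r i))

/-- The matrix whose `r`-th row is the kinetic-order vector `v r`. -/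
def Zmat (v : Fin m → Fin n → ℝ) : Matrix (Fin m) (Fin n) ℝ :=
  Matrix.of fun r i => v r i

/-- The Jacobian matrix of `f` at `c`. -/
def jac (f : (Fin n → ℝ) → Fin n → ℝ) (c : Fin n → ℝ) : Matrix (Fin n) (Fin n) ℝ :=
  Matrix.of fun i j => fderiv ℝ (fun x => f x i) c (Pi.single j 1)

/-- The species formation rate function of a kinetics `K`. -/
def specForm (y y' : Fin m → Fin n → ℝ) (K : Fin m → (Fin n → ℝ) → ℝ) (c : Fin n → ℝ) :
    Fin n → ℝ :=
  fun i => ∑ r, K r c * (y' r i - y r i)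

/-- The power-law rate functions with rate vector `κ` and kinetic order `v`. -/
def powerLaw (κ : Fin m → ℝ) (v : Fin m → Fin n → ℝ) : Fin m → (Fin n → ℝ) → ℝ :=
  fun r c => κ r * ∏ j, c j ^ v r j

/-- The power-law species formation rate function. -/
def plf (y y' : Fin m → Fin n → ℝ) (κ : Fin m → ℝ) (v : Fin m → Fin n → ℝ) (c : Fin n → ℝ) :
    Fin n → ℝ :=
  fun i => ∑ r, κ r * (∏ j, c j ^ v r j) * (y' r i - y r i)

/-- The extended rate function associated with a reduced basis `ω` and `f`. -/
def tildeF (d : ℕ) (ω : Fin d → Fin n → ℝ) (f : (Fin n → ℝ) → Fin n → ℝ) (c : Fin n → ℝ) :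
    Fin n → ℝ :=
  fun i => if h : (i : ℕ) < d then ∑ j, ω ⟨(i : ℕ), h⟩ j * c j else f c i

/-- The extended rate function with the bottom `s` components negated. -/
def hatF (d : ℕ) (ω : Fin d → Fin n → ℝ) (f : (Fin n → ℝ) → Fin n → ℝ) (c : Fin n → ℝ) :
    Fin n → ℝ :=
  fun i => if h : (i : ℕ) < d then ∑ j, ω ⟨(i : ℕ), h⟩ j * c j else -(f c i)

/-- Membership in the positive orthant. -/
def Pos (c : Fin n → ℝ) : Prop := ∀ i, 0 < c i

/-- The network is injective over the power-law kinetics with fixed kinetic order `v`. -/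
def InjOverPL (y y' : Fin m → Fin n → ℝ) (v : Fin m → Fin n → ℝ) : Prop :=
  ∀ κ : Fin m → ℝ, (∀ r, 0 < κ r) → ∀ a b : Fin n → ℝ, Pos a → Pos b → a ≠ b →
    a - b ∈ stoichSpan y y' → plf y y' κ v a ≠ plf y y' κ v b

/-- An influence specification takes values in `{-1, 0, 1}`. -/
def IsInfluence (I : Fin m → Fin n → ℝ) : Prop := ∀ r i, I r i = -1 ∨ I r i = 0 ∨ I r i = 1

/-- The influence specification associated with a kinetic order `v`. -/
def infOf (v : Fin m → Fin n → ℝ) : Fin m → Fin n → ℝ := fun r i => Real.sign (v r i)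

/-- `v ∈ Σ(I)`: the kinetic order `v` has associated influence specification `I`. -/
def InSigma (I : Fin m → Fin n → ℝ) (v : Fin m → Fin n → ℝ) : Prop :=
  ∀ r i, Real.sign (v r i) = I r i

/-- The partial order `I' ≼ I` on influence specifications. -/
def Preceq (I' I : Fin m → Fin n → ℝ) : Prop :=
  ∀ r i, (I' r i = 1 → I r i = 1) ∧ (I' r i = -1 → I r i = -1)

/-- The matrix `M̃(v)`: top `d` rows `ω`, bottom rows from `A ⬝ Z(v)`. -/
def Mt (y y' : Fin m → Fin n → ℝ) (d : ℕ) (ω : Fin d → Fin n → ℝ)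
    (v : Fin m → Fin n → ℝ) : Matrix (Fin n) (Fin n) ℝ :=
  tildeMat d ω (stoich y y' * Zmat v)

/-- The influence specification `I` has a signed determinant. -/
def SignedDet (y y' : Fin m → Fin n → ℝ) (d : ℕ) (ω : Fin d → Fin n → ℝ)
    (I : Fin m → Fin n → ℝ) : Prop :=
  ∀ v w, InSigma I v → InSigma I w →
    Real.sign (Mt y y' d ω v).det = Real.sign (Mt y y' d ω w).det

/-- The influence specification `I` is sign-nonsingular (SNS). -/
def IsSNS (y y' : Fin m → Fin n → ℝ) (d : ℕ) (ω : Fin d → Fin n → ℝ)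
    (I : Fin m → Fin n → ℝ) : Prop :=
  SignedDet y y' d ω I ∧ ∀ v, InSigma I v → (Mt y y' d ω v).det ≠ 0

/-- `Ω` is an admissible kinetics domain: `ℝ^n_{>0} ⊆ Ω ⊆ ℝ^n_{≥0}`. -/
def KinDom (Ω : Set (Fin n → ℝ)) : Prop :=
  {c : Fin n → ℝ | ∀ i, 0 < c i} ⊆ Ω ∧ Ω ⊆ {c : Fin n → ℝ | ∀ i, 0 ≤ c i}

/-- The rate functions are nonnegative on the domain. -/
def KinNonneg (Ω : Set (Fin n → ℝ)) (K : Fin m → (Fin n → ℝ) → ℝ) : Prop :=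
  ∀ r, ∀ c ∈ Ω, 0 ≤ K r c

/-- `I_r^+ ⊆ supp c`. -/
def PosSupp (I : Fin m → Fin n → ℝ) (r : Fin m) (c : Fin n → ℝ) : Prop :=
  ∀ i, I r i = 1 → c i ≠ 0

/-- The kinetics `K` respects the influence specification `I`. -/
def Respects (Ω : Set (Fin n → ℝ)) (K : Fin m → (Fin n → ℝ) → ℝ)
    (I : Fin m → Fin n → ℝ) : Prop :=
  ∀ c ∈ Ω, ∀ r, (0 < K r c ↔ PosSupp I r c)

/-- The kinetics `K` is strictly monotonic with respect to `I`. -/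
def StrictlyMonotonic (Ω : Set (Fin n → ℝ)) (K : Fin m → (Fin n → ℝ) → ℝ)
    (I : Fin m → Fin n → ℝ) : Prop :=
  Respects Ω K I ∧
  ∀ (r : Fin m) (c d : Fin n → ℝ), c ∈ Ω → d ∈ Ω → PosSupp I r c → PosSupp I r d →
    ∀ i, (∀ j, j ≠ i → c j = d j) →
      ((I r i = 1 → c i < d i → K r c < K r d) ∧
       (I r i = -1 → c i < d i → K r d < K r c) ∧
       (I r i = 0 → K r c = K r d))

/-- The kinetics `K` is differentiable with respect to `I`. -/
def DiffWrt (Ω : Set (Fin n → ℝ)) (K : Fin m → (Fin n → ℝ) → ℝ)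
    (I : Fin m → Fin n → ℝ) : Prop :=
  Respects Ω K I ∧
  (∀ r, ∀ c ∈ Ω, ContinuousWithinAt (K r) Ω c) ∧
  (∀ (r : Fin m) (c : Fin n → ℝ), (∀ i, 0 < c i) → DifferentiableAt ℝ (K r) c) ∧
  (∀ (r : Fin m) (c : Fin n → ℝ), (∀ i, 0 < c i) → ∀ i,
     Real.sign (fderiv ℝ (K r) c (Pi.single i 1)) = I r i)

/-- `a` and `b` are non-overlapping with respect to `I`. -/
def NonOverlap (I : Fin m → Fin n → ℝ) (a b : Fin n → ℝ) : Prop :=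
  ∀ r, ¬ PosSupp I r a → PosSupp I r b

/-- The kinetics `K` is weakly monotonic with respect to `I`. -/
def WeaklyMonotonic (y : Fin m → Fin n → ℝ) (Ω : Set (Fin n → ℝ))
    (K : Fin m → (Fin n → ℝ) → ℝ) (I : Fin m → Fin n → ℝ) : Prop :=
  ∀ a ∈ Ω, ∀ b ∈ Ω, NonOverlap I a b → ∀ r,
    (K r b < K r a → ∃ i, Real.sign (a i - b i) = I r i ∧ I r i ≠ 0) ∧
    (K r a = K r b →
      ((∀ i, y r i ≠ 0 → a i = b i) ∨
        ∃ i j, i ≠ j ∧ Real.sign (a i - b i) = I r i ∧ I r i ≠ 0 ∧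
          Real.sign (a j - b j) = -(I r j) ∧ I r j ≠ 0))

/-- A square real matrix is a P-matrix: all principal minors are positive. -/
def IsPMatrix {N : ℕ} (M : Matrix (Fin N) (Fin N) ℝ) : Prop :=
  ∀ J : Finset (Fin N),
    0 < (M.submatrix (fun i : {x // x ∈ J} => (i : Fin N))
          (fun j : {x // x ∈ J} => (j : Fin N))).det

/-- The minor `det(A_{J,C})` of the stoichiometric matrix. -/
def subDetA (y y' : Fin m → Fin n → ℝ) (s : ℕ) (J : Finset (Fin n)) (C : Finset (Fin m))
    (hJ : J.card = s) (hC : C.card = s) : ℝ :=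
  ((stoich y y').submatrix (fun a => (J.orderIsoOfFin hJ a).1)
    (fun b => (C.orderIsoOfFin hC b).1)).det

/-- The minor `det(Z(v)_{C,J})`. -/
def subDetZ (v : Fin m → Fin n → ℝ) (s : ℕ) (C : Finset (Fin m)) (J : Finset (Fin n))
    (hC : C.card = s) (hJ : J.card = s) : ℝ :=
  ((Zmat v).submatrix (fun a => (C.orderIsoOfFin hC a).1)
    (fun b => (J.orderIsoOfFin hJ b).1)).det

/-- The Hill-type species formation rate function. -/
def hillf (y y' : Fin m → Fin n → ℝ) (κ : Fin m → ℝ) (δ v : Fin m → Fin n → ℝ)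
    (c : Fin n → ℝ) : Fin n → ℝ :=
  fun i => ∑ r, κ r * (∏ j, (c j ^ v r j) / (δ r j + c j ^ v r j)) * (y' r i - y r i)




/-- Auxiliary bounded sigmoid-like function. -/
noncomputable def gfun (x : ℝ) : ℝ := x / (1 + |x|)

lemma gfun_abs_le (x : ℝ) : |gfun x| ≤ 1 := by
  have h : (0:ℝ) < 1 + |x| := by positivity
  rw [gfun, abs_div, abs_of_pos h, div_le_one h]
  linarith [abs_nonneg x]

lemma gfun_lt {p q : ℝ} (hp : 0 < p) (hpq : p < q) : gfun p < gfun q := by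
  have hq : 0 < q := hp.trans hpq
  rw [gfun, gfun, abs_of_pos hp, abs_of_pos hq,
    div_lt_div_iff₀ (by linarith) (by linarith)]
  nlinarith

open Filter Topology in
lemma gfun_hasDerivAt {x : ℝ} (hx : 0 < x) :
    HasDerivAt gfun (1/(1+x)^2) x := by
  have h1 : HasDerivAt (fun y : ℝ => y/(1+y)) (1/(1+x)^2) x := by
    have h := (hasDerivAt_id' x).fun_div ((hasDerivAt_id' x).const_add 1)
      (by linarith : (1:ℝ)+x ≠ 0)
    exact h.congr_deriv (by ring)
  refine h1.congr_of_eventuallyEq ?_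
  filter_upwards [eventually_gt_nhds hx] with y hy
  rw [gfun, abs_of_pos hy]

lemma gfun_continuous : Continuous gfun := by
  apply Continuous.div continuous_id (by continuity)
  intro x; positivity

/-- Auxiliary rate function with coefficient vector `E`. -/
noncomputable def auxK {n : ℕ} (C : ℝ) (E : Fin n → ℝ) (x : Fin n → ℝ) : ℝ :=
  C + ∑ i, E i * gfun (x i)

lemma auxK_hasFDerivAt {n : ℕ} (C : ℝ) (E : Fin n → ℝ) (x : Fin n → ℝ)
    (hx : ∀ i, 0 < x i) :
    HasFDerivAt (auxK C E)
      (∑ i, E i • ((1/(1+x i)^2) •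
        ContinuousLinearMap.proj (R := ℝ) (φ := fun _ : Fin n => ℝ) i)) x := by
  have h : ∀ i : Fin n, HasFDerivAt (fun y : Fin n → ℝ => E i * gfun (y i))
      (E i • ((1/(1+x i)^2) •
        ContinuousLinearMap.proj (R := ℝ) (φ := fun _ : Fin n => ℝ) i)) x := by
    intro i
    have hg : HasFDerivAt (fun y : Fin n → ℝ => gfun (y i))
        ((1/(1+x i)^2) •
          ContinuousLinearMap.proj (R := ℝ) (φ := fun _ : Fin n => ℝ) i) x :=
      by have h0 := (gfun_hasDerivAt (hx i)).comp_hasFDerivAt x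
           (hasFDerivAt_apply (𝕜 := ℝ) (F' := fun _ : Fin n => ℝ) i x)
         exact h0
    exact hg.const_mul (E i)
  exact (HasFDerivAt.fun_sum (fun i _ => h i)).const_add C

lemma auxK_fderiv_single {n : ℕ} (C : ℝ) (E : Fin n → ℝ) (x : Fin n → ℝ)
    (hx : ∀ i, 0 < x i) (j : Fin n) :
    fderiv ℝ (auxK C E) x (Pi.single j 1) = E j * (1/(1+x j)^2) := by
  rw [(auxK_hasFDerivAt C E x hx).fderiv]
  simp only [ContinuousLinearMap.sum_apply, ContinuousLinearMap.smul_apply,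
    ContinuousLinearMap.proj_apply, smul_eq_mul, Pi.single_apply]
  rw [Finset.sum_eq_single j]
  · simp
  · intro b _ hb; simp [hb]
  · simp

lemma auxK_pos {n : ℕ} (E : Fin n → ℝ) (x : Fin n → ℝ) :
    0 < auxK (1 + ∑ i, |E i|) E x := by
  have h1 : |∑ i, E i * gfun (x i)| ≤ ∑ i, |E i| := by
    calc |∑ i, E i * gfun (x i)| ≤ ∑ i, |E i * gfun (x i)| :=
          Finset.abs_sum_le_sum_abs _ _
      _ ≤ ∑ i, |E i| := by
          apply Finset.sum_le_sum
          intro i _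
          rw [abs_mul]
          calc |E i| * |gfun (x i)| ≤ |E i| * 1 :=
                mul_le_mul_of_nonneg_left (gfun_abs_le _) (abs_nonneg _)
            _ = |E i| := mul_one _
  have := abs_le.mp h1
  rw [auxK]; linarith

lemma auxK_continuous {n : ℕ} (C : ℝ) (E : Fin n → ℝ) : Continuous (auxK C E) := by
  apply Continuous.add continuous_const
  exact continuous_finset_sum _ fun i _ =>
    (continuous_const.mul (gfun_continuous.comp (continuous_apply i)))

lemma auxK_sub {n : ℕ} (C : ℝ) (E : Fin n → ℝ) (a b : Fin n → ℝ) :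
    auxK C E a - auxK C E b = ∑ i, E i * (gfun (a i) - gfun (b i)) := by
  simp [auxK, mul_sub, Finset.sum_sub_distrib]

lemma jac_specForm {n m : ℕ} (y y' : Fin m → Fin n → ℝ)
    (K : Fin m → (Fin n → ℝ) → ℝ) (c : Fin n → ℝ)
    (hd : ∀ r, DifferentiableAt ℝ (K r) c) (i j : Fin n) :
    jac (specForm y y' K) c i j
      = ∑ r, (y' r i - y r i) * fderiv ℝ (K r) c (Pi.single j 1) := by
  have h : HasFDerivAt (fun x => specForm y y' K x i)
      (∑ r, (y' r i - y r i) • fderiv ℝ (K r) c) c := by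
    have h2 : ∀ r : Fin m, HasFDerivAt (fun x => K r x * (y' r i - y r i))
        ((y' r i - y r i) • fderiv ℝ (K r) c) c :=
      fun r => (hd r).hasFDerivAt.mul_const _
    exact HasFDerivAt.fun_sum (fun r _ => h2 r)
  show fderiv ℝ (fun x => specForm y y' K x i) c (Pi.single j 1) = _
  rw [h.fderiv]
  simp [ContinuousLinearMap.sum_apply]


/-- Corollary: injectivity over `K_d(N,I)` precludes positive
degenerate steady states. -/
theorem stmt14 {n m : ℕ}
    (y y' : Fin m → Fin n → ℝ)
    (I : Fin m → Fin n → ℝ) (hI : IsInfluence I)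
    (hinj : ∀ (Ω : Set (Fin n → ℝ)) (K : Fin m → (Fin n → ℝ) → ℝ),
      KinDom Ω → KinNonneg Ω K → DiffWrt Ω K I →
      ∀ a b : Fin n → ℝ, (∀ i, 0 < a i) → (∀ i, 0 < b i) → a ≠ b →
        a - b ∈ stoichSpan y y' → specForm y y' K a ≠ specForm y y' K b) :
    ∀ (Ω : Set (Fin n → ℝ)) (K : Fin m → (Fin n → ℝ) → ℝ),
      KinDom Ω → KinNonneg Ω K → DiffWrt Ω K I →
      ∀ c : Fin n → ℝ, (∀ i, 0 < c i) → specForm y y' K c = 0 →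
        LinearMap.ker (jac (specForm y y' K) c).mulVecLin ⊓ stoichSpan y y' = ⊥ := by
  intro Ω K hdom hnn hKd c hc hss
  rw [Submodule.eq_bot_iff]
  intro σ hσmem
  by_contra hσ0
  rw [Submodule.mem_inf] at hσmem
  obtain ⟨hker, hΓ⟩ := hσmem
  obtain ⟨i₀, hi₀⟩ : ∃ i, σ i ≠ 0 := by
    by_contra h
    push_neg at h
    exact hσ0 (funext h)
  haveI : Nonempty (Fin n) := ⟨i₀⟩
  set t : ℝ := Finset.univ.inf' Finset.univ_nonempty
    (fun i => c i / (2 * (|σ i| + 1))) with ht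
  have htpos : 0 < t := by
    rw [Finset.lt_inf'_iff]
    intro i _
    have := hc i
    positivity
  have hapos : ∀ i, 0 < c i + t * σ i := by
    intro i
    have h1 : t ≤ c i / (2 * (|σ i| + 1)) := Finset.inf'_le _ (Finset.mem_univ i)
    rw [le_div_iff₀ (by positivity)] at h1
    nlinarith [abs_nonneg (σ i), htpos,
      mul_nonneg htpos.le (by linarith [neg_abs_le (σ i)] : (0:ℝ) ≤ σ i + |σ i|)]
  set a : Fin n → ℝ := fun i => c i + t * σ i with ha
  have hane : a ≠ c := by
    intro h
    have h2 := congrFun h i₀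
    simp only [ha] at h2
    have h3 : t * σ i₀ = 0 := by linarith
    rcases mul_eq_zero.mp h3 with h4 | h4
    · exact htpos.ne' h4
    · exact hi₀ h4
  have hsub : a - c ∈ stoichSpan y y' := by
    have hmem := Submodule.smul_mem (stoichSpan y y') t hΓ
    have h : a - c = t • σ := by
      funext j
      simp [ha, smul_eq_mul]
    rwa [h]
  set D : Fin m → Fin n → ℝ := fun r j => fderiv ℝ (K r) c (Pi.single j 1) with hD
  have hsignD : ∀ r j, Real.sign (D r j) = I r j := fun r j => hKd.2.2.2 r c hc j
  have hDmul : ∀ r j, I r j * |D r j| = D r j := by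
    intro r j
    rw [← hsignD r j]
    rcases lt_trichotomy (D r j) 0 with h | h | h
    · rw [Real.sign_of_neg h, abs_of_neg h]; ring
    · rw [h]; simp
    · rw [Real.sign_of_pos h, abs_of_pos h]; ring
  set u : Fin n → ℝ := fun j => gfun (a j) - gfun (c j) with hu
  have husign : ∀ j, σ j ≠ 0 → 0 < (t * σ j) / u j := by
    intro j hj
    rcases hj.lt_or_gt with h | h
    · have h1 : a j < c j := by
        show c j + t * σ j < c j
        nlinarith [mul_pos htpos (neg_pos.mpr h)]
      have h2 : u j < 0 := by
        have h3 := gfun_lt (hapos j) h1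
        show gfun (a j) - gfun (c j) < 0
        linarith
      apply div_pos_of_neg_of_neg ?_ h2
      nlinarith [mul_pos htpos (neg_pos.mpr h)]
    · have h1 : c j < a j := by
        show c j < c j + t * σ j
        nlinarith [mul_pos htpos h]
      have h2 : 0 < u j := by
        have h3 := gfun_lt (hc j) h1
        show 0 < gfun (a j) - gfun (c j)
        linarith
      exact div_pos (by nlinarith [mul_pos htpos h]) h2
  set γ : Fin m → Fin n → ℝ :=
    fun r j => if σ j = 0 ∨ I r j = 0 then 1 else |D r j| * ((t * σ j) / u j) with hγ
  have hγpos : ∀ r j, 0 < γ r j := by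
    intro r j
    show 0 < if σ j = 0 ∨ I r j = 0 then 1 else |D r j| * ((t * σ j) / u j)
    split
    · exact one_pos
    · next h =>
      push_neg at h
      obtain ⟨h1, h2⟩ := h
      have hD0 : D r j ≠ 0 := by
        intro h3
        apply h2
        rw [← hsignD r j, h3, Real.sign_zero]
      exact mul_pos (abs_pos.mpr hD0) (husign j h1)
  set E : Fin m → Fin n → ℝ := fun r j => I r j * γ r j with hE
  have hEe : ∀ r j, E r j = I r j * γ r j := fun r j => rfl
  have hkey : ∀ r j, E r j * u j = D r j * (t * σ j) := by
    intro r j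
    by_cases h1 : σ j = 0
    · have hu0 : u j = 0 := by
        show gfun (a j) - gfun (c j) = 0
        have : a j = c j := by
          show c j + t * σ j = c j
          rw [h1]; ring
        rw [this, sub_self]
      rw [hu0, h1]; ring
    by_cases h2 : I r j = 0
    · have hD0 : D r j = 0 := by
        have h3 := hsignD r j
        rw [h2] at h3
        exact Real.sign_eq_zero_iff.mp h3
      rw [hEe, h2, hD0]; ring
    have hu0 : u j ≠ 0 := by
      intro h3
      have h4 := husign j h1
      rw [h3, div_zero] at h4
      exact lt_irrefl _ h4
    have hγe : γ r j = |D r j| * ((t * σ j) / u j) := by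
      show (if σ j = 0 ∨ I r j = 0 then 1 else |D r j| * ((t * σ j) / u j)) = _
      rw [if_neg (by tauto)]
    rw [hEe, hγe]
    calc I r j * (|D r j| * ((t * σ j) / u j)) * u j
        = (I r j * |D r j|) * ((t * σ j) / u j * u j) := by ring
      _ = D r j * (t * σ j) := by rw [hDmul r j, div_mul_cancel₀ _ hu0]
  set Kt : Fin m → (Fin n → ℝ) → ℝ := fun r => auxK (1 + ∑ j, |E r j|) (E r) with hKt
  set Ω' : Set (Fin n → ℝ) := {x | ∀ i, 0 < x i} with hΩ'
  have hdom' : KinDom Ω' := ⟨subset_rfl, fun x hx i => (hx i).le⟩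
  have hnn' : KinNonneg Ω' Kt := fun r x _ => (auxK_pos (E r) x).le
  have hdiff' : DiffWrt Ω' Kt I := by
    refine ⟨?_, ?_, ?_, ?_⟩
    · intro x hx r
      constructor
      · intro _ i _
        exact (hx i).ne'
      · intro _
        exact auxK_pos (E r) x
    · intro r x _
      exact (auxK_continuous _ _).continuousWithinAt
    · intro r x hx
      exact (auxK_hasFDerivAt _ _ x hx).differentiableAt
    · intro r x hx j
      have hfd : fderiv ℝ (Kt r) x (Pi.single j 1) = E r j * (1/(1+x j)^2) :=
        auxK_fderiv_single _ _ x hx j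
      rw [hfd]
      have hw : (0:ℝ) < 1/(1+x j)^2 := by
        have := hx j
        positivity
      rcases hI r j with h | h | h
      · have hneg : E r j * (1/(1+x j)^2) < 0 := by
          rw [hEe, h]
          nlinarith [hγpos r j]
        rw [Real.sign_of_neg hneg, h]
      · rw [hEe, h, zero_mul, zero_mul, Real.sign_zero]
      · have hpos2 : 0 < E r j * (1/(1+x j)^2) := by
          rw [hEe, h]
          nlinarith [hγpos r j]
        rw [Real.sign_of_pos hpos2, h]
  have hker0 : ∀ i, ∑ j, jac (specForm y y' K) c i j * σ j = 0 := by
    intro i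
    have h := LinearMap.mem_ker.mp hker
    have h2 := congrFun h i
    simpa [Matrix.mulVecLin_apply, Matrix.mulVec, dotProduct] using h2
  have hdiffat : ∀ r, DifferentiableAt ℝ (K r) c := fun r => hKd.2.2.1 r c hc
  have hjac : ∀ i j, jac (specForm y y' K) c i j = ∑ r, (y' r i - y r i) * D r j :=
    fun i j => jac_specForm y y' K c hdiffat i j
  have hmain : ∀ i, ∑ r, (Kt r a - Kt r c) * (y' r i - y r i) = 0 := by
    intro i
    have h1 : ∀ r, Kt r a - Kt r c = ∑ j, D r j * (t * σ j) := by
      intro r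
      have h2 : Kt r a - Kt r c = ∑ j, E r j * (gfun (a j) - gfun (c j)) :=
        auxK_sub _ _ a c
      rw [h2]
      exact Finset.sum_congr rfl fun j _ => hkey r j
    calc ∑ r, (Kt r a - Kt r c) * (y' r i - y r i)
        = ∑ r, ∑ j, (y' r i - y r i) * D r j * (t * σ j) := by
          refine Finset.sum_congr rfl fun r _ => ?_
          rw [h1 r, Finset.sum_mul]
          exact Finset.sum_congr rfl fun j _ => by ring
      _ = ∑ j, (∑ r, (y' r i - y r i) * D r j) * (t * σ j) := by
          rw [Finset.sum_comm]
          exact Finset.sum_congr rfl fun j _ => (Finset.sum_mul _ _ _).symm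
      _ = t * ∑ j, jac (specForm y y' K) c i j * σ j := by
          rw [Finset.mul_sum]
          exact Finset.sum_congr rfl fun j _ => by rw [hjac i j]; ring
      _ = 0 := by rw [hker0 i, mul_zero]
  have heq : specForm y y' Kt a = specForm y y' Kt c := by
    funext i
    have h := hmain i
    have h2 : ∑ r, (Kt r a * (y' r i - y r i) - Kt r c * (y' r i - y r i)) = 0 := by
      rw [← h]
      exact Finset.sum_congr rfl fun r _ => by ring
    rw [Finset.sum_sub_distrib] at h2
    show ∑ r, Kt r a * (y' r i - y r i) = ∑ r, Kt r c * (y' r i - y r i)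
    linarith
  exact hinj Ω' Kt hdom' hnn' hdiff' a c hapos hc hane hsub heq

end CRN
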